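/- arXiv:2306.12195 — 5 statements merged into one kernel-verified Lean document; each statement's English description precedes it below -/
import Mathlib

section
/- Let E be a real inner product space, let μ > 0 be a real number, and for v ∈ E set W(v) = √(1 + μ²‖v‖²) and N(v) = (μ·v/W(v), 1/W(v)) ∈ E × ℝ. Then for all v, w ∈ E one has ⟪v/W(v) − w/W(w), v − w⟫ = (1/(2μ²))·(W(v) + W(w))·‖N(v) − N(w)‖², where E × ℝ carries the product inner product. -/
open scoped RealInnerProductSpace

/-- Pointwise content of the factorization Lemma 2.3: for `v, w` in a real inner
product space, with `W v = √(1 + μ²‖v‖²)` and `N v = (μ·v/W v, 1/W v) ∈ E × ℝ`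
(with the product inner product, i.e. the `L²` product), one has
`⟪v/W v − w/W w, v − w⟫ = (1/(2μ²))·(W v + W w)·‖N v − N w‖²`. -/
theorem stmt_0 {E : Type*} [NormedAddCommGroup E] [InnerProductSpace ℝ E]
    (μ : ℝ) (hμ : 0 < μ)
    (W : E → ℝ) (hW : ∀ v, W v = Real.sqrt (1 + μ ^ 2 * ‖v‖ ^ 2))
    (N : E → WithLp 2 (E × ℝ))
    (hN : ∀ v, N v = (WithLp.equiv 2 (E × ℝ)).symm ((μ / W v) • v, 1 / W v))
    (v w : E) :
    ⟪(W v)⁻¹ • v - (W w)⁻¹ • w, v - w⟫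
      = (1 / (2 * μ ^ 2)) * (W v + W w) * ‖N v - N w‖ ^ 2 := by
  set a := W v with ha
  set b := W w with hb
  have hposv : (0:ℝ) < 1 + μ ^ 2 * ‖v‖ ^ 2 := by positivity
  have hposw : (0:ℝ) < 1 + μ ^ 2 * ‖w‖ ^ 2 := by positivity
  have ha2 : a ^ 2 = 1 + μ ^ 2 * ‖v‖ ^ 2 := by
    rw [ha, hW]; exact Real.sq_sqrt hposv.le
  have hb2 : b ^ 2 = 1 + μ ^ 2 * ‖w‖ ^ 2 := by
    rw [hb, hW]; exact Real.sq_sqrt hposw.le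
  have hapos : 0 < a := by rw [ha, hW]; exact Real.sqrt_pos.mpr hposv
  have hbpos : 0 < b := by rw [hb, hW]; exact Real.sqrt_pos.mpr hposw
  have hNsub : N v - N w = (WithLp.equiv 2 (E × ℝ)).symm
      ((μ / a) • v - (μ / b) • w, 1 / a - 1 / b) := by
    rw [hN v, hN w]; rfl
  have hnorm : ‖N v - N w‖ ^ 2
      = ‖(μ / a) • v - (μ / b) • w‖ ^ 2 + (1 / a - 1 / b) ^ 2 := by
    rw [hNsub, WithLp.prod_norm_sq_eq_of_L2]
    simp [Real.norm_eq_abs, sq_abs]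
  have hfirst : ‖(μ / a) • v - (μ / b) • w‖ ^ 2
      = (μ / a) ^ 2 * ‖v‖ ^ 2 - 2 * ((μ / a) * (μ / b)) * ⟪v, w⟫
        + (μ / b) ^ 2 * ‖w‖ ^ 2 := by
    rw [norm_sub_sq_real, real_inner_smul_left, real_inner_smul_right,
      norm_smul, norm_smul, mul_pow, mul_pow]
    simp only [Real.norm_eq_abs, sq_abs]
    ring
  have hLHS : ⟪(a⁻¹ • v - b⁻¹ • w : E), v - w⟫
      = a⁻¹ * ‖v‖ ^ 2 - a⁻¹ * ⟪v, w⟫ - b⁻¹ * ⟪v, w⟫ + b⁻¹ * ‖w‖ ^ 2 := by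
    rw [inner_sub_left, inner_sub_right, inner_sub_right,
      real_inner_smul_left, real_inner_smul_left, real_inner_smul_left,
      real_inner_smul_left, real_inner_self_eq_norm_sq,
      real_inner_self_eq_norm_sq, real_inner_comm w v]
    ring
  rw [hLHS, hnorm, hfirst]
  have hv2 : ‖v‖ ^ 2 = (a ^ 2 - 1) / μ ^ 2 := by
    field_simp [ha2]
    rw [ha2]; ring
  have hw2 : ‖w‖ ^ 2 = (b ^ 2 - 1) / μ ^ 2 := by
    field_simp [hb2]
    rw [hb2]; ring
  rw [hv2, hw2]
  field_simp
  ring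
end

section
/- Let E be a real inner product space, let μ > 0 be a real number, and for v ∈ E set W(v) = √(1 + μ²‖v‖²). Then for all v, w ∈ E one has ⟪v/W(v) − w/W(w), v − w⟫ ≥ 0, and equality holds if and only if v = w. -/
open scoped RealInnerProductSpace

private lemma key_mono {c s t a b : ℝ} (hc : 0 < c) (hs : 0 ≤ s) (ht : 0 ≤ t)
    (ha : 0 < a) (hb : 0 < b) (ha2 : a ^ 2 = 1 + c * s ^ 2)
    (hb2 : b ^ 2 = 1 + c * t ^ 2) (hst : s < t) : a⁻¹ * s < b⁻¹ * t := by
  have h1 : (s * b) ^ 2 < (t * a) ^ 2 := by nlinarith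
  have h2 : 0 ≤ s * b := mul_nonneg hs hb.le
  have h3 : 0 < t * a := mul_pos (hs.trans_lt hst) ha
  have h4 : s * b < t * a := by nlinarith
  rw [inv_mul_eq_div, inv_mul_eq_div, div_lt_div_iff₀ ha hb]
  linarith

/-- Monotonicity in the factorization Lemma 2.3: with `W v = √(1 + μ²‖v‖²)`,
`⟪v/W v − w/W w, v − w⟫ ≥ 0`, with equality if and only if `v = w`. -/
theorem stmt_1 {E : Type*} [NormedAddCommGroup E] [InnerProductSpace ℝ E]
    (μ : ℝ) (hμ : 0 < μ)
    (W : E → ℝ) (hW : ∀ v, W v = Real.sqrt (1 + μ ^ 2 * ‖v‖ ^ 2))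
    (v w : E) :
    0 ≤ ⟪(W v)⁻¹ • v - (W w)⁻¹ • w, v - w⟫ ∧
      (⟪(W v)⁻¹ • v - (W w)⁻¹ • w, v - w⟫ = 0 ↔ v = w) := by
  have hc : (0:ℝ) < μ ^ 2 := by positivity
  have hpos : ∀ u : E, (0:ℝ) < 1 + μ ^ 2 * ‖u‖ ^ 2 := fun u => by positivity
  have ha : 0 < W v := by rw [hW]; exact Real.sqrt_pos.2 (hpos v)
  have hb : 0 < W w := by rw [hW]; exact Real.sqrt_pos.2 (hpos w)
  have ha2 : (W v) ^ 2 = 1 + μ ^ 2 * ‖v‖ ^ 2 := by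
    rw [hW]; exact Real.sq_sqrt (hpos v).le
  have hb2 : (W w) ^ 2 = 1 + μ ^ 2 * ‖w‖ ^ 2 := by
    rw [hW]; exact Real.sq_sqrt (hpos w).le
  have hexp : ⟪(W v)⁻¹ • v - (W w)⁻¹ • w, v - w⟫ =
      (W v)⁻¹ * ‖v‖ ^ 2 + (W w)⁻¹ * ‖w‖ ^ 2 - ((W v)⁻¹ + (W w)⁻¹) * ⟪v, w⟫ := by
    simp [inner_sub_left, inner_sub_right, real_inner_smul_left,
      real_inner_self_eq_norm_sq, real_inner_comm w v]
    ring
  by_cases h : ‖v‖ = ‖w‖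
  · have hab : W v = W w := by rw [hW, hW, h]
    have hexp2 : ⟪(W v)⁻¹ • v - (W w)⁻¹ • w, v - w⟫ = (W v)⁻¹ * ‖v - w‖ ^ 2 := by
      rw [hexp, @norm_sub_sq_real, hab, h]; ring
    constructor
    · rw [hexp2]; positivity
    · rw [hexp2]
      constructor
      · intro h0
        have : ‖v - w‖ ^ 2 = 0 := by
          rcases mul_eq_zero.1 h0 with h1 | h1
          · exact absurd h1 (inv_ne_zero ha.ne')
          · exact h1
        have : ‖v - w‖ = 0 := by nlinarith [norm_nonneg (v - w)]
        exact sub_eq_zero.1 (norm_eq_zero.1 this)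
      · intro h0; subst h0; simp
  · have hne : v ≠ w := fun h0 => h (by rw [h0])
    have hpos' : 0 < ⟪(W v)⁻¹ • v - (W w)⁻¹ • w, v - w⟫ := by
      rw [hexp]
      have hi : ⟪v, w⟫ ≤ ‖v‖ * ‖w‖ := real_inner_le_norm v w
      have hsum : 0 < (W v)⁻¹ + (W w)⁻¹ := by positivity
      have step1 : (‖v‖ - ‖w‖) * ((W v)⁻¹ * ‖v‖ - (W w)⁻¹ * ‖w‖) ≤
          (W v)⁻¹ * ‖v‖ ^ 2 + (W w)⁻¹ * ‖w‖ ^ 2 - ((W v)⁻¹ + (W w)⁻¹) * ⟪v, w⟫ := by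
        nlinarith [mul_le_mul_of_nonneg_left hi hsum.le]
      have step2 : 0 < (‖v‖ - ‖w‖) * ((W v)⁻¹ * ‖v‖ - (W w)⁻¹ * ‖w‖) := by
        rcases lt_or_gt_of_ne h with hlt | hlt
        · have := key_mono hc (norm_nonneg v) (norm_nonneg w) ha hb ha2 hb2 hlt
          nlinarith
        · have := key_mono hc (norm_nonneg w) (norm_nonneg v) hb ha hb2 ha2 hlt
          nlinarith
      linarith
    exact ⟨hpos'.le, ⟨fun h0 => absurd h0.symm hpos'.ne, fun h0 => absurd h0 hne⟩⟩
end

section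
/- Let E be a real inner product space, let μ > 0 be a real number, and for v ∈ E set W(v) = √(1 + μ²‖v‖²). Then for all v, w ∈ E one has ⟪v/W(v) − w/W(w), v − w⟫ = μ⁻²·(W(v) + W(w))·(1 − μ²⟪v,w⟫/(W(v)W(w)) − 1/(W(v)W(w))). -/
open scoped RealInnerProductSpace

/-- First intermediate identity (equation (3.1)) in the proof of the
factorization Lemma 2.3: with `W v = √(1 + μ²‖v‖²)`,
`⟪v/W v − w/W w, v − w⟫ = μ⁻²·(W v + W w)·(1 − μ²⟪v,w⟫/(W v·W w) − 1/(W v·W w))`. -/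
theorem stmt_2 {E : Type*} [NormedAddCommGroup E] [InnerProductSpace ℝ E]
    (μ : ℝ) (hμ : 0 < μ)
    (W : E → ℝ) (hW : ∀ v, W v = Real.sqrt (1 + μ ^ 2 * ‖v‖ ^ 2))
    (v w : E) :
    ⟪(W v)⁻¹ • v - (W w)⁻¹ • w, v - w⟫
      = (μ ^ 2)⁻¹ * (W v + W w) *
        (1 - μ ^ 2 * ⟪v, w⟫ / (W v * W w) - 1 / (W v * W w)) := by
  have hWpos : ∀ u : E, 0 < W u := by
    intro u; rw [hW]; positivity
  have hWsq : ∀ u : E, W u ^ 2 = 1 + μ ^ 2 * ‖u‖ ^ 2 := by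
    intro u; rw [hW, Real.sq_sqrt]; positivity
  have hv := hWsq v
  have hw := hWsq w
  have hvp := hWpos v
  have hwp := hWpos w
  have hnv : ‖v‖ ^ 2 = (W v ^ 2 - 1) / μ ^ 2 := by
    field_simp [hv]
    linear_combination -hv
  have hnw : ‖w‖ ^ 2 = (W w ^ 2 - 1) / μ ^ 2 := by
    field_simp [hw]
    linear_combination -hw
  simp only [inner_sub_left, inner_sub_right, real_inner_smul_left,
    real_inner_self_eq_norm_sq, real_inner_comm w v, hnv, hnw]
  field_simp
  ring
end

section
/- Let x₁, y₁, x₂, y₂ be real numbers with (x₁, y₁) ≠ (0, 0), let λ > 0 and μ > 0, and let λₓ, λᵧ, μₓ, μᵧ be real numbers. Set s = √(x₁² + y₁²) and, for ℓ > 0 and reals ℓ₁, ℓ₂, define κ(ℓ, ℓ₁, ℓ₂) = (x₁y₂ − x₂y₁)/(ℓ·s³) + (ℓ₁·y₁ − ℓ₂·x₁)/(ℓ²·s). Then κ(λ, λₓ, λᵧ) − (μᵧ·x₁ − μₓ·y₁)/(μ·λ·s) = μ · κ(λ·μ, λₓ·μ + λ·μₓ, λᵧ·μ + λ·μᵧ).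 -/
/-- Algebraic identity underlying Proposition 2.4 (mean curvature of a vertical
cylinder): with `s = √(x₁² + y₁²)` and
`κ ℓ ℓ₁ ℓ₂ = (x₁y₂ − x₂y₁)/(ℓ·s³) + (ℓ₁·y₁ − ℓ₂·x₁)/(ℓ²·s)`, one has
`κ λ λₓ λᵧ − (μᵧx₁ − μₓy₁)/(μλs) = μ·κ (λμ) (λₓμ + λμₓ) (λᵧμ + λμᵧ)`. -/
theorem stmt_5 (x₁ y₁ x₂ y₂ : ℝ) (hxy : (x₁, y₁) ≠ ((0 : ℝ), (0 : ℝ)))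
    (lam mu : ℝ) (hlam : 0 < lam) (hmu : 0 < mu)
    (lamx lamy mux muy : ℝ)
    (s : ℝ) (hs : s = Real.sqrt (x₁ ^ 2 + y₁ ^ 2))
    (κ : ℝ → ℝ → ℝ → ℝ)
    (hκ : ∀ ℓ ℓ₁ ℓ₂ : ℝ,
      κ ℓ ℓ₁ ℓ₂ = (x₁ * y₂ - x₂ * y₁) / (ℓ * s ^ 3) + (ℓ₁ * y₁ - ℓ₂ * x₁) / (ℓ ^ 2 * s)) :
    κ lam lamx lamy - (muy * x₁ - mux * y₁) / (mu * lam * s)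
      = mu * κ (lam * mu) (lamx * mu + lam * mux) (lamy * mu + lam * muy) := by
  have hpos : 0 < x₁ ^ 2 + y₁ ^ 2 := by
    rcases (show x₁ ≠ 0 ∨ y₁ ≠ 0 by
      by_contra h; push_neg at h; exact hxy (by simp [h.1, h.2])) with h | h
    · positivity
    · positivity
  have hspos : 0 < s := hs ▸ Real.sqrt_pos.mpr hpos
  rw [hκ, hκ]
  field_simp
  ring
end

section
/- Let λ, μ, a, b : ℝ² → ℝ with λ > 0 and μ > 0 everywhere, and for p = (x, y, t) ∈ ℝ³ define the bilinear form g_p(u, v) = λ(x,y)²·(u₁v₁ + u₂v₂) + μ(x,y)²·(u₃ − λ(x,y)(a(x,y)u₁ + b(x,y)u₂))·(v₃ − λ(x,y)(a(x,y)v₁ + b(x,y)v₂)) on ℝ³. Assume λ, a, b are differentiable and define E₁(x,y,t) = (1/λ(x,y), 0, a(x,y)), E₂(x,y,t) = (0, 1/λ(x,y), b(x,y)), E₃(x,y,t) = (0, 0, 1/μ(x,y)). Then at every point p = (x, y, t), (1/μ(x,y))·g_p([E₁, E₂](p), E₃(p)) = ((∂(λb)/∂x)(x,y) − (∂(λa)/∂y)(x,y))/λ(x,y)²,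 where [E₁, E₂](p) = (DE₂)_p(E₁(p)) − (DE₁)_p(E₂(p)). -/
/-- Equation (2.3) in the local model of a Killing submersion: with the metric
`g_p(u, v) = λ²(u₁v₁ + u₂v₂) + μ²(u₃ − λ(au₁ + bu₂))(v₃ − λ(av₁ + bv₂))`
and the frame `E₁ = (1/λ, 0, a)`, `E₂ = (0, 1/λ, b)`, `E₃ = (0, 0, 1/μ)`,
one has `(1/μ)·g_p([E₁,E₂](p), E₃(p)) = ((λb)ₓ − (λa)ᵧ)/λ²`, where
`[E₁,E₂](p) = (DE₂)_p(E₁(p)) − (DE₁)_p(E₂(p))`. -/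
theorem stmt_9 (lam mu a b : ℝ × ℝ → ℝ)
    (hlam_pos : ∀ q : ℝ × ℝ, 0 < lam q) (hmu_pos : ∀ q : ℝ × ℝ, 0 < mu q)
    (hlam : Differentiable ℝ lam) (ha : Differentiable ℝ a)
    (hb : Differentiable ℝ b)
    (g : ℝ × ℝ × ℝ → (ℝ × ℝ × ℝ) → (ℝ × ℝ × ℝ) → ℝ)
    (hg : ∀ (p u v : ℝ × ℝ × ℝ), g p u v =
      lam (p.1, p.2.1) ^ 2 * (u.1 * v.1 + u.2.1 * v.2.1)
      + mu (p.1, p.2.1) ^ 2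
        * (u.2.2 - lam (p.1, p.2.1) * (a (p.1, p.2.1) * u.1 + b (p.1, p.2.1) * u.2.1))
        * (v.2.2 - lam (p.1, p.2.1) * (a (p.1, p.2.1) * v.1 + b (p.1, p.2.1) * v.2.1)))
    (E₁ E₂ E₃ : ℝ × ℝ × ℝ → ℝ × ℝ × ℝ)
    (hE₁ : ∀ p : ℝ × ℝ × ℝ, E₁ p = (1 / lam (p.1, p.2.1), 0, a (p.1, p.2.1)))
    (hE₂ : ∀ p : ℝ × ℝ × ℝ, E₂ p = (0, 1 / lam (p.1, p.2.1), b (p.1, p.2.1)))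
    (hE₃ : ∀ p : ℝ × ℝ × ℝ, E₃ p = (0, 0, 1 / mu (p.1, p.2.1)))
    (p : ℝ × ℝ × ℝ) :
    (1 / mu (p.1, p.2.1))
        * g p (fderiv ℝ E₂ p (E₁ p) - fderiv ℝ E₁ p (E₂ p)) (E₃ p)
      = (fderiv ℝ (fun q => lam q * b q) (p.1, p.2.1) (1, 0)
          - fderiv ℝ (fun q => lam q * a q) (p.1, p.2.1) (0, 1))
        / lam (p.1, p.2.1) ^ 2 := by
  set q : ℝ × ℝ := (p.1, p.2.1) with hq
  have hlne : lam q ≠ 0 := ne_of_gt (hlam_pos q)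
  have hmne : mu q ≠ 0 := ne_of_gt (hmu_pos q)
  set L : (ℝ × ℝ × ℝ) →L[ℝ] ℝ × ℝ :=
    (ContinuousLinearMap.fst ℝ ℝ (ℝ × ℝ)).prod
      ((ContinuousLinearMap.fst ℝ ℝ ℝ).comp (ContinuousLinearMap.snd ℝ ℝ (ℝ × ℝ))) with hLdef
  set Dl := fderiv ℝ lam q with hDl
  set Da := fderiv ℝ a q with hDa
  set Db := fderiv ℝ b q with hDb
  have hinv : HasFDerivAt (fun r : ℝ × ℝ => 1 / lam r) (-(lam q ^ 2)⁻¹ • Dl) q := by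
    have h := (hasFDerivAt_inv hlne).comp q (hlam q).hasFDerivAt
    have he : (ContinuousLinearMap.toSpanSingleton ℝ (-(lam q ^ 2)⁻¹)).comp Dl
        = -(lam q ^ 2)⁻¹ • Dl := by
      refine ContinuousLinearMap.ext fun v => ?_
      simp [mul_comm]
    simpa [one_div, Function.comp_def, ← hDl, he] using h
  have hF2 : HasFDerivAt (fun p : ℝ × ℝ × ℝ => ((0:ℝ), 1 / lam (p.1, p.2.1), b (p.1, p.2.1)))
      ((0 : (ℝ × ℝ × ℝ) →L[ℝ] ℝ).prod (((-(lam q ^ 2)⁻¹ • Dl).comp L).prod (Db.comp L))) p :=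
    HasFDerivAt.prodMk (hasFDerivAt_const (0:ℝ) p) (HasFDerivAt.prodMk (hinv.comp p L.hasFDerivAt :)
      ((hb q).hasFDerivAt.comp p L.hasFDerivAt :))
  have hF1 : HasFDerivAt (fun p : ℝ × ℝ × ℝ => (1 / lam (p.1, p.2.1), (0:ℝ), a (p.1, p.2.1)))
      (((-(lam q ^ 2)⁻¹ • Dl).comp L).prod ((0 : (ℝ × ℝ × ℝ) →L[ℝ] ℝ).prod (Da.comp L))) p :=
    HasFDerivAt.prodMk (hinv.comp p L.hasFDerivAt :) (HasFDerivAt.prodMk (hasFDerivAt_const (0:ℝ) p)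
      ((ha q).hasFDerivAt.comp p L.hasFDerivAt :))
  have hDE2 : fderiv ℝ E₂ p =
      ((0 : (ℝ × ℝ × ℝ) →L[ℝ] ℝ).prod (((-(lam q ^ 2)⁻¹ • Dl).comp L).prod (Db.comp L))) := by
    have h : E₂ = fun p : ℝ × ℝ × ℝ => ((0:ℝ), 1 / lam (p.1, p.2.1), b (p.1, p.2.1)) :=
      funext hE₂
    rw [h]; exact hF2.fderiv
  have hDE1 : fderiv ℝ E₁ p =
      (((-(lam q ^ 2)⁻¹ • Dl).comp L).prod ((0 : (ℝ × ℝ × ℝ) →L[ℝ] ℝ).prod (Da.comp L))) := by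
    have h : E₁ = fun p : ℝ × ℝ × ℝ => (1 / lam (p.1, p.2.1), (0:ℝ), a (p.1, p.2.1)) :=
      funext hE₁
    rw [h]; exact hF1.fderiv
  have hsm1 : ∀ (T : (ℝ × ℝ) →L[ℝ] ℝ) (c : ℝ), T (c, 0) = c * T (1, 0) := by
    intro T c
    have hc : ((c, (0:ℝ)) : ℝ × ℝ) = c • ((1:ℝ), (0:ℝ)) := by simp
    rw [hc, T.map_smul, smul_eq_mul]
  have hsm2 : ∀ (T : (ℝ × ℝ) →L[ℝ] ℝ) (c : ℝ), T (0, c) = c * T (0, 1) := by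
    intro T c
    have hc : (((0:ℝ), c) : ℝ × ℝ) = c • ((0:ℝ), (1:ℝ)) := by simp
    rw [hc, T.map_smul, smul_eq_mul]
  have hmulb : fderiv ℝ (fun r => lam r * b r) q = lam q • Db + b q • Dl :=
    fderiv_mul (hlam q) (hb q)
  have hmula : fderiv ℝ (fun r => lam r * a r) q = lam q • Da + a q • Dl :=
    fderiv_mul (hlam q) (ha q)
  rw [hg, hDE1, hDE2, hE₁ p, hE₂ p, hE₃ p, hmulb, hmula]
  simp only [ContinuousLinearMap.prod_apply, ContinuousLinearMap.comp_apply,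
    ContinuousLinearMap.smul_apply, ContinuousLinearMap.zero_apply,
    ContinuousLinearMap.add_apply, smul_eq_mul, Prod.fst_sub, Prod.snd_sub,
    Prod.mk_sub_mk]
  have hL1 : L ((1 / lam q, 0, a q) : ℝ × ℝ × ℝ) = ((1 / lam q, 0) : ℝ × ℝ) := rfl
  have hL2 : L ((0, 1 / lam q, b q) : ℝ × ℝ × ℝ) = ((0, 1 / lam q) : ℝ × ℝ) := rfl
  rw [hL1, hL2, hsm1 Dl, hsm1 Db, hsm2 Dl, hsm2 Da]
  rw [← hq]
  field_simp
  ring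
end
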